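/- Let a > 1 and let γ = (γ_k)_{k∈ℤ} be a bounded complex sequence with q₁(γ) < ∞. Then D_γ is of class C¹(A_a): there exists a bounded operator B on ℓ²(ℤ) such that ⟨A_a φ, D_γ ψ⟩ − ⟨φ, D_γ(A_a ψ)⟩ = ⟨φ, Bψ⟩ for all φ, ψ ∈ D_X. Moreover there is a constant C_a > 0 depending only on a with ‖B‖ ≤ C_a·q₁(γ). -/

import Mathlib

open scoped ComplexInnerProductSpace

noncomputable section

/-- `ℓ²(ℤ)`. -/
abbrev l2Z : Type := lp (fun _ : ℤ => ℂ) 2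

/-- The norm `q₁(γ) = sup_k |γ_k| + sup_k |k·(γ_k − γ_{k+1})|`. -/
noncomputable def q1 (γ : ℤ → ℂ) : ℝ :=
  (⨆ k : ℤ, ‖γ k‖) + ⨆ k : ℤ, ‖(k : ℂ) * (γ k - γ (k + 1))‖

section Aux

set_option maxHeartbeats 1000000

lemma stmt3aux_rpow2 (f : ℤ → ℂ) :
    (fun k => ‖f k‖ ^ ENNReal.toReal 2) = fun k => ‖f k‖ ^ 2 := by
  funext k
  rw [show ENNReal.toReal 2 = ((2:ℕ):ℝ) by simp, Real.rpow_natCast]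

lemma stmt3aux_mem2_iff (f : ∀ _ : ℤ, ℂ) : Memℓp f 2 ↔ Summable fun k => ‖f k‖ ^ 2 := by
  rw [memℓp_gen_iff (p := 2) (by norm_num), stmt3aux_rpow2]

lemma stmt3aux_norm_sq (f : l2Z) : ‖f‖ ^ 2 = ∑' k, ‖f k‖ ^ 2 := by
  have := lp.norm_rpow_eq_tsum (p := 2) (by norm_num) f
  rw [show ENNReal.toReal 2 = ((2:ℕ):ℝ) by simp] at this
  simpa [Real.rpow_natCast] using this

lemma stmt3aux_summable_sq (f : l2Z) : Summable fun k => ‖f k‖ ^ 2 :=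
  (stmt3aux_mem2_iff f).1 f.2

/-- existence of the "shifted multiplication" operator `(Tψ) j = c j * ψ (j + m)`. -/
lemma stmt3aux_exists_shiftMul (c : ℤ → ℂ) (m : ℤ) (K : ℝ) (hK : 0 ≤ K)
    (hc : ∀ j, ‖c j‖ ≤ K) :
    ∃ T : l2Z →L[ℂ] l2Z, (∀ (ψ : l2Z) (j : ℤ), (T ψ) j = c j * ψ (j + m)) ∧ ‖T‖ ≤ K := by
  have hshift : ∀ ψ : l2Z, Summable fun j : ℤ => ‖ψ (j + m)‖ ^ 2 := by
    intro ψ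
    exact ((Equiv.addRight m).summable_iff (f := fun k => ‖ψ k‖ ^ 2)).2
      (stmt3aux_summable_sq ψ)
  have hdom : ∀ ψ : l2Z, ∀ j : ℤ, ‖c j * ψ (j + m)‖ ^ 2 ≤ K ^ 2 * ‖ψ (j + m)‖ ^ 2 := by
    intro ψ j
    rw [norm_mul, mul_pow]
    gcongr
    exact hc j
  have hmem : ∀ ψ : l2Z, Memℓp (fun j : ℤ => c j * ψ (j + m)) 2 := by
    intro ψ
    rw [stmt3aux_mem2_iff]
    exact Summable.of_nonneg_of_le (fun j => by positivity) (hdom ψ) ((hshift ψ).mul_left _)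
  set L : l2Z →ₗ[ℂ] l2Z :=
    { toFun := fun ψ => (⟨fun j => c j * ψ (j + m), hmem ψ⟩ : l2Z)
      map_add' := by
        intro ψ χ
        apply Subtype.ext
        funext j
        simp only []
        rw [lp.coeFn_add]
        show c j * ((ψ : ∀ _ : ℤ, ℂ) + (χ : ∀ _ : ℤ, ℂ)) (j + m) = _
        show _ = ((⟨_, hmem ψ⟩ : l2Z) : ∀ _ : ℤ, ℂ) j + ((⟨_, hmem χ⟩ : l2Z) : ∀ _ : ℤ, ℂ) j
        simp [Pi.add_apply]
        ring
      map_smul' := by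
        intro r ψ
        apply Subtype.ext
        funext j
        simp only []
        rw [lp.coeFn_smul]
        show c j * (r • (ψ : ∀ _ : ℤ, ℂ)) (j + m) = _
        show _ = r • (((⟨_, hmem ψ⟩ : l2Z) : ∀ _ : ℤ, ℂ) j)
        simp [Pi.smul_apply, smul_eq_mul]
        ring }
  have hb : ∀ ψ : l2Z, ‖L ψ‖ ≤ K * ‖ψ‖ := by
    intro ψ
    have h1 : ‖L ψ‖ ^ 2 ≤ (K * ‖ψ‖) ^ 2 := by
      rw [stmt3aux_norm_sq]
      have : ∑' j : ℤ, ‖(L ψ) j‖ ^ 2 ≤ ∑' j : ℤ, K ^ 2 * ‖ψ (j + m)‖ ^ 2 := by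
        apply Summable.tsum_le_tsum _ _ ((hshift ψ).mul_left _)
        · intro j
          exact hdom ψ j
        · exact Summable.of_nonneg_of_le (fun j => by positivity) (hdom ψ)
            ((hshift ψ).mul_left _)
      refine this.trans ?_
      rw [tsum_mul_left, mul_pow]
      gcongr
      rw [stmt3aux_norm_sq]
      exact le_of_eq ((Equiv.addRight m).tsum_eq (fun k => ‖ψ k‖ ^ 2))
    have h2 : (0:ℝ) ≤ K * ‖ψ‖ := by positivity
    nlinarith [norm_nonneg (L ψ)]
  exact ⟨L.mkContinuous K hb, fun ψ j => rfl, L.mkContinuous_norm_le hK hb⟩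

lemma stmt3aux_summable_geom_int {a : ℝ} (ha : 1 < a) : Summable fun m : ℤ => a ^ (-|m|) := by
  have hlt : ‖a⁻¹‖ < 1 := by
    rw [Real.norm_eq_abs, abs_of_pos (by positivity)]
    exact inv_lt_one_of_one_lt₀ ha
  have hnat : Summable fun n : ℕ => (a⁻¹) ^ n := summable_geometric_of_norm_lt_one hlt
  have key : ∀ n : ℕ, a ^ (-|(n : ℤ)|) = (a⁻¹) ^ n := by
    intro n
    rw [Nat.abs_cast, ← zpow_natCast a⁻¹, inv_zpow, ← zpow_neg]
  apply Summable.of_nat_of_neg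
  · exact hnat.congr fun n => (key n).symm
  · apply hnat.congr
    intro n
    rw [show a ^ (-|(-(n:ℤ))|) = a ^ (-|(n:ℤ)|) by rw [abs_neg], key n]

lemma stmt3aux_summable_msq_geom_int {a : ℝ} (ha : 1 < a) :
    Summable fun m : ℤ => (m : ℝ) ^ 2 * a ^ (-|m|) := by
  have hlt : ‖a⁻¹‖ < 1 := by
    rw [Real.norm_eq_abs, abs_of_pos (by positivity)]
    exact inv_lt_one_of_one_lt₀ ha
  have hnat : Summable fun n : ℕ => (n : ℝ) ^ 2 * (a⁻¹) ^ n :=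
    summable_pow_mul_geometric_of_norm_lt_one 2 hlt
  have key : ∀ n : ℕ, ((n : ℤ) : ℝ) ^ 2 * a ^ (-|(n : ℤ)|) = (n : ℝ) ^ 2 * (a⁻¹) ^ n := by
    intro n
    rw [Nat.abs_cast]
    push_cast
    rw [← zpow_natCast a⁻¹, inv_zpow, ← zpow_neg]
  apply Summable.of_nat_of_neg
  · exact hnat.congr fun n => (key n).symm
  · apply hnat.congr
    intro n
    have h : (((-(n:ℤ)) : ℤ) : ℝ) ^ 2 * a ^ (-|(-(n:ℤ))|)
        = ((n:ℤ) : ℝ) ^ 2 * a ^ (-|(n:ℤ)|) := by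
      rw [abs_neg]; push_cast; ring_nf
    rw [h, key n]

/-- master domination lemma -/
lemma stmt3aux_dom_summable {a : ℝ} (ha : 1 < a) {P Q : ℤ → ℝ} (hP : Summable P)
    (hQ : Summable Q) (hP0 : ∀ k, 0 ≤ P k) (hQ0 : ∀ k, 0 ≤ Q k) :
    Summable fun km : ℤ × ℤ => a ^ (-|km.2|) * (P (km.1 - km.2) + Q km.1) := by
  have ha0 : ∀ m : ℤ, 0 < a ^ (-|m|) := fun m => zpow_pos (by linarith) _
  have hsl : ∀ m : ℤ, Summable fun k : ℤ => P (k - m) := by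
    intro m
    exact (((Equiv.subRight m).summable_iff (f := P)).2 hP).congr fun k => rfl
  have hg : Summable fun mk : ℤ × ℤ => a ^ (-|mk.1|) * (P (mk.2 - mk.1) + Q mk.2) := by
    rw [summable_prod_of_nonneg (by
      intro p
      have := hP0 (p.2 - p.1); have := hQ0 p.2
      have := (ha0 p.1).le
      positivity)]
    constructor
    · intro m
      exact Summable.congr (((hsl m).add hQ).mul_left (a ^ (-|m|))) fun k => rfl
    · have hval : ∀ m : ℤ, ∑' k, a ^ (-|m|) * (P (k - m) + Q k)
          = a ^ (-|m|) * ((∑' k, P k) + ∑' k, Q k) := by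
        intro m
        rw [tsum_mul_left]
        congr 1
        have h1 : ∑' k : ℤ, (P (k - m) + Q k) = (∑' k : ℤ, P (k - m)) + ∑' k, Q k :=
          Summable.tsum_add (hsl m) hQ
        have h2 : ∑' k : ℤ, P (k - m) = ∑' k, P k := (Equiv.subRight m).tsum_eq P
        rw [h1, h2]
      apply Summable.congr ((stmt3aux_summable_geom_int ha).mul_right
        ((∑' k, P k) + ∑' k, Q k))
      intro m
      exact (hval m).symm
  have := ((Equiv.prodComm ℤ ℤ).summable_iff (f := fun mk : ℤ × ℤ =>
    a ^ (-|mk.1|) * (P (mk.2 - mk.1) + Q mk.2))).2 hg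
  exact this.congr fun km => rfl

lemma stmt3aux_hM1 {γ : ℤ → ℂ} (hb1 : BddAbove (Set.range fun k : ℤ => ‖γ k‖)) (k : ℤ) :
    ‖γ k‖ ≤ ⨆ k : ℤ, ‖γ k‖ := le_ciSup hb1 k

lemma stmt3aux_keybound {γ : ℤ → ℂ}
    (hb1 : BddAbove (Set.range fun k : ℤ => ‖γ k‖))
    (hb2 : BddAbove (Set.range fun k : ℤ => ‖(k : ℂ) * (γ k - γ (k + 1))‖))
    {m : ℤ} (hm : 0 < m) (j : ℤ) :
    ‖(2 * (j:ℂ) + (m:ℂ)) * (γ (j + m) - γ j)‖ ≤ 2 * (m:ℝ)^2 * q1 γ := by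
  set M₁ := ⨆ k : ℤ, ‖γ k‖ with hM₁def
  set M₂ := ⨆ k : ℤ, ‖(k : ℂ) * (γ k - γ (k + 1))‖ with hM₂def
  have h1 : ∀ k : ℤ, ‖γ k‖ ≤ M₁ := fun k => le_ciSup hb1 k
  have h2 : ∀ k : ℤ, ‖(k : ℂ) * (γ k - γ (k + 1))‖ ≤ M₂ := fun k => le_ciSup hb2 k
  set n := m.toNat with hn
  have hmn : (n : ℤ) = m := Int.toNat_of_nonneg hm.le
  set f : ℕ → ℂ := fun i => γ (j + i) with hf
  have htel : γ (j + m) - γ j = ∑ i ∈ Finset.range n, (f (i + 1) - f i) := by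
    rw [Finset.sum_range_sub f n, hf]
    simp [hmn]
  have hterm : ∀ i ∈ Finset.range n,
      ‖(2 * (j:ℂ) + (m:ℂ)) * (f (i + 1) - f i)‖ ≤ 2 * M₂ + (m:ℝ) * (2 * M₁) := by
    intro i hi
    have hi' : (i : ℤ) < m := by
      rw [← hmn]; exact_mod_cast Finset.mem_range.1 hi
    set k : ℤ := j + i with hk
    have hd : f (i + 1) - f i = γ (k + 1) - γ k := by
      rw [hf, hk]; push_cast; ring_nf
    have hsplit : (2 * (j:ℂ) + (m:ℂ)) = 2 * (k:ℂ) + ((m - 2*i : ℤ) : ℂ) := by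
      rw [hk]; push_cast; ring
    rw [hd, hsplit, add_mul]
    refine (norm_add_le _ _).trans ?_
    have hA : ‖2 * (k:ℂ) * (γ (k + 1) - γ k)‖ ≤ 2 * M₂ := by
      rw [mul_assoc, norm_mul]
      have : ‖(k:ℂ) * (γ (k + 1) - γ k)‖ = ‖(k:ℂ) * (γ k - γ (k + 1))‖ := by
        rw [← norm_neg]; ring_nf
      simp only [Complex.norm_ofNat, this]
      nlinarith [h2 k, norm_nonneg ((k:ℂ) * (γ k - γ (k + 1)))]
    have hB : ‖((m - 2*i : ℤ) : ℂ) * (γ (k + 1) - γ k)‖ ≤ (m:ℝ) * (2 * M₁) := by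
      rw [norm_mul]
      have habs : ‖((m - 2*i : ℤ) : ℂ)‖ ≤ (m : ℝ) := by
        rw [Complex.norm_intCast]
        have : |m - 2*(i:ℤ)| ≤ m := by rw [abs_le]; omega
        exact_mod_cast this
      have hdn : ‖γ (k + 1) - γ k‖ ≤ 2 * M₁ := by
        refine (norm_sub_le _ _).trans ?_
        have := h1 (k+1); have := h1 k; linarith
      have hn1 : (0:ℝ) ≤ ‖γ (k+1) - γ k‖ := norm_nonneg _
      have hm1 : (0:ℝ) ≤ (m:ℝ) := by exact_mod_cast hm.le
      nlinarith [habs, hdn, norm_nonneg ((m - 2*i : ℤ) : ℂ)]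
    linarith
  have hM₁0 : 0 ≤ M₁ := le_trans (norm_nonneg (γ 0)) (h1 0)
  have hM₂0 : 0 ≤ M₂ := le_trans (norm_nonneg _) (h2 0)
  calc ‖(2 * (j:ℂ) + (m:ℂ)) * (γ (j + m) - γ j)‖
      = ‖∑ i ∈ Finset.range n, (2 * (j:ℂ) + (m:ℂ)) * (f (i + 1) - f i)‖ := by
        rw [← Finset.mul_sum, ← htel]
    _ ≤ ∑ i ∈ Finset.range n, ‖(2 * (j:ℂ) + (m:ℂ)) * (f (i + 1) - f i)‖ :=
        norm_sum_le _ _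
    _ ≤ ∑ _i ∈ Finset.range n, (2 * M₂ + (m:ℝ) * (2 * M₁)) :=
        Finset.sum_le_sum hterm
    _ = (n : ℝ) * (2 * M₂ + (m:ℝ) * (2 * M₁)) := by
        rw [Finset.sum_const, Finset.card_range, nsmul_eq_mul]
    _ ≤ 2 * (m:ℝ)^2 * q1 γ := by
        have hnm : (n : ℝ) = (m : ℝ) := by exact_mod_cast hmn
        rw [hnm, q1, ← hM₁def, ← hM₂def]
        have hm1 : (1:ℝ) ≤ (m:ℝ) := by exact_mod_cast hm
        nlinarith [mul_nonneg (by nlinarith : (0:ℝ) ≤ (m:ℝ)^2 - (m:ℝ)) hM₂0]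

lemma stmt3aux_keybound_all {γ : ℤ → ℂ}
    (hb1 : BddAbove (Set.range fun k : ℤ => ‖γ k‖))
    (hb2 : BddAbove (Set.range fun k : ℤ => ‖(k : ℂ) * (γ k - γ (k + 1))‖))
    (m j : ℤ) :
    ‖(2 * (j:ℂ) + (m:ℂ)) * (γ (j + m) - γ j)‖ ≤ 2 * (m:ℝ)^2 * q1 γ := by
  have hq0 : 0 ≤ q1 γ := by
    rw [q1]
    have h1 : (0:ℝ) ≤ ⨆ k : ℤ, ‖γ k‖ := le_trans (norm_nonneg (γ 0)) (le_ciSup hb1 0)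
    have h2 : (0:ℝ) ≤ ⨆ k : ℤ, ‖(k : ℂ) * (γ k - γ (k + 1))‖ :=
      le_trans (norm_nonneg _) (le_ciSup hb2 0)
    linarith
  rcases lt_trichotomy m 0 with hm | hm | hm
  · -- m < 0 : reduce to the positive case
    have hm' : 0 < -m := by omega
    have key := stmt3aux_keybound hb1 hb2 hm' (j + m)
    have h1 : (2 * ((j+m:ℤ):ℂ) + ((-m:ℤ):ℂ)) = (2 * (j:ℂ) + (m:ℂ)) := by push_cast; ring
    have h2 : (j + m) + (-m) = j := by ring
    rw [h1, h2] at key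
    have h3 : ‖(2 * (j:ℂ) + (m:ℂ)) * (γ j - γ (j + m))‖
        = ‖(2 * (j:ℂ) + (m:ℂ)) * (γ (j + m) - γ j)‖ := by
      rw [← norm_neg]; ring_nf
    rw [h3] at key
    have h4 : ((-m:ℤ):ℝ)^2 = ((m:ℤ):ℝ)^2 := by push_cast; ring
    rw [h4] at key
    exact key
  · subst hm
    simp
  · exact stmt3aux_keybound hb1 hb2 hm j

/-- real arithmetic helper -/
lemma stmt3aux_abbound {x y u v P1 P2 : ℝ} (hx : 0 ≤ x) (hy : 0 ≤ y) (hu : 0 ≤ u)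
    (hv : 0 ≤ v) (h1 : x^2 ≤ P1) (h2 : (v*x)^2 ≤ P1) (h3 : y^2 ≤ P2) (h4 : (u*y)^2 ≤ P2) :
    (1/2) * ((u+v) * x * y) ≤ P1 + P2 := by
  nlinarith [sq_nonneg (u*y - x), sq_nonneg (v*x - y)]

/-- the reindexing `(k, m) ↦ (k - m, -m)` (an involution). -/
def stmt3aux_eInv : ℤ × ℤ ≃ ℤ × ℤ where
  toFun p := (p.1 - p.2, -p.2)
  invFun p := (p.1 - p.2, -p.2)
  left_inv p := by cases p; simp [Prod.ext_iff]
  right_inv p := by cases p; simp [Prod.ext_iff]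

/-- the reindexing `(k, m) ↦ (m, k - m)`. -/
def stmt3aux_eShift : ℤ × ℤ ≃ ℤ × ℤ where
  toFun p := (p.2, p.1 - p.2)
  invFun q := (q.2 + q.1, q.1)
  left_inv p := by cases p; simp [Prod.ext_iff]
  right_inv q := by cases q; simp [Prod.ext_iff]

end Aux

set_option maxHeartbeats 2000000 in
/-- Proposition 3.3 ("criteria1"): for `a > 1`, if `q₁(γ) < ∞` then the diagonal operator
`D_γ` is of class `C¹(A_a)`, and the commutator `B = ad_{A_a} D_γ` satisfies
`‖B‖ ≤ C_a·q₁(γ)` for a constant `C_a > 0` depending only on `a`. -/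
theorem stmt3 (a : ℝ) (ha : 1 < a)
    -- the conjugate operator A_a, with domain D_X and the prescribed action
    (Aa : l2Z →ₗ.[ℂ] l2Z)
    (hdom : ∀ φ : l2Z,
      φ ∈ Aa.domain ↔ Summable fun k : ℤ => (1 + (k : ℝ) ^ 2) * ‖φ k‖ ^ 2)
    (haction : ∀ (φ : l2Z) (hφ : φ ∈ Aa.domain) (k : ℤ),
      (Aa ⟨φ, hφ⟩ : l2Z) k = (1 / 2 : ℂ) * ∑' m : ℤ,
        (if m = 0 then 0 else
          ((a ^ (-|m|) : ℝ) : ℂ) * (2 * (k : ℂ) - (m : ℂ)) * φ (k - m))) :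
    ∃ Ca > (0 : ℝ), ∀ (γ : ℤ → ℂ) (Dγ : l2Z →L[ℂ] l2Z),
      -- γ bounded with q₁(γ) < ∞
      BddAbove (Set.range fun k : ℤ => ‖γ k‖) →
      BddAbove (Set.range fun k : ℤ => ‖(k : ℂ) * (γ k - γ (k + 1))‖) →
      -- Dγ the associated diagonal operator
      (∀ (φ : l2Z) (k : ℤ), (Dγ φ) k = γ k * φ k) →
      -- then Dγ ∈ C¹(A_a) with commutator B, and ‖B‖ ≤ C_a·q₁(γ)
      ∃ B : l2Z →L[ℂ] l2Z,
        (∀ φ ψ : Aa.domain,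
          ⟪Aa φ, Dγ (ψ : l2Z)⟫ - ⟪(φ : l2Z), Dγ (Aa ψ)⟫ = ⟪(φ : l2Z), B (ψ : l2Z)⟫) ∧
        ‖B‖ ≤ Ca * q1 γ := by
  have ha0 : ∀ m : ℤ, (0:ℝ) < a ^ (-|m|) := fun m => zpow_pos (by linarith) _
  set S : ℝ := ∑' m : ℤ, (m : ℝ)^2 * a ^ (-|m|) with hSdef
  have hS0 : 0 ≤ S := tsum_nonneg (fun m => by positivity)
  refine ⟨S + 1, by positivity, ?_⟩
  intro γ Dγ hb1 hb2 hD
  -- basic facts about q1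
  have hq0 : 0 ≤ q1 γ := by
    rw [q1]
    have h1 : (0:ℝ) ≤ ⨆ k : ℤ, ‖γ k‖ := le_trans (norm_nonneg (γ 0)) (le_ciSup hb1 0)
    have h2 : (0:ℝ) ≤ ⨆ k : ℤ, ‖(k : ℂ) * (γ k - γ (k + 1))‖ :=
      le_trans (norm_nonneg _) (le_ciSup hb2 0)
    linarith
  have hMq : ∀ k, ‖γ k‖ ≤ q1 γ := by
    intro k
    rw [q1]
    have h1 := le_ciSup hb1 k
    have h2 : (0:ℝ) ≤ ⨆ k : ℤ, ‖(k : ℂ) * (γ k - γ (k + 1))‖ :=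
      le_trans (norm_nonneg _) (le_ciSup hb2 0)
    linarith
  -- the coefficients of the commutator
  set c : ℤ → ℤ → ℂ := fun m j =>
    (1/2:ℂ) * ((a^(-|m|) : ℝ) : ℂ) * (2*(j:ℂ)+(m:ℂ)) * (γ (j+m) - γ j) with hcdef
  set K : ℤ → ℝ := fun m => a^(-|m|) * (m:ℝ)^2 * q1 γ with hKdef
  have hK0 : ∀ m, 0 ≤ K m := by
    intro m
    have := (ha0 m).le
    rw [hKdef]
    positivity
  have hcb : ∀ m j, ‖c m j‖ ≤ K m := by
    intro m j
    have key := stmt3aux_keybound_all hb1 hb2 m j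
    have hnorm : ‖c m j‖ = (1/2) * (a^(-|m|)) * ‖(2*(j:ℂ)+(m:ℂ)) * (γ (j+m) - γ j)‖ := by
      rw [hcdef]
      simp only []
      have h2 : ‖(1/2:ℂ)‖ = 1/2 := by norm_num
      have hr : ‖((a^(-|m|):ℝ):ℂ)‖ = a^(-|m|) := by
        rw [Complex.norm_real, Real.norm_eq_abs, abs_of_pos (ha0 m)]
      rw [mul_assoc, norm_mul, norm_mul, h2, hr]
    rw [hnorm, hKdef]
    simp only []
    nlinarith [(ha0 m).le, norm_nonneg ((2*(j:ℂ)+(m:ℂ)) * (γ (j+m) - γ j))]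
  -- the pieces of the commutator
  have hTm : ∀ m : ℤ, ∃ T : l2Z →L[ℂ] l2Z,
      (∀ (ψ : l2Z) (j : ℤ), (T ψ) j = c m j * ψ (j + m)) ∧ ‖T‖ ≤ K m :=
    fun m => stmt3aux_exists_shiftMul (c m) m (K m) (hK0 m) (hcb m)
  set T : ℤ → (l2Z →L[ℂ] l2Z) := fun m => (hTm m).choose with hTdef
  have hTc : ∀ m (ψ : l2Z) (j : ℤ), (T m ψ) j = c m j * ψ (j + m) :=
    fun m => (hTm m).choose_spec.1
  have hTn : ∀ m, ‖T m‖ ≤ K m := fun m => (hTm m).choose_spec.2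
  -- summability of the commutator series
  have hKsum : Summable K := by
    apply Summable.congr (((stmt3aux_summable_msq_geom_int ha).mul_right (q1 γ)))
    intro m
    rw [hKdef]
    ring
  have hTsum : Summable T := Summable.of_norm_bounded hKsum hTn
  set B : l2Z →L[ℂ] l2Z := ∑' m, T m with hBdef
  have hKtsum : ∑' m, K m = S * q1 γ := by
    rw [hSdef, ← tsum_mul_right]
    apply tsum_congr
    intro m
    rw [hKdef]
    ring
  have hBn : ‖B‖ ≤ (S + 1) * q1 γ := by
    have h1 : ‖B‖ ≤ ∑' m, ‖T m‖ :=
      norm_tsum_le_tsum_norm (Summable.of_nonneg_of_le (fun m => norm_nonneg _) hTn hKsum)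
    have h2 : ∑' m, ‖T m‖ ≤ ∑' m, K m :=
      Summable.tsum_le_tsum hTn (Summable.of_nonneg_of_le (fun m => norm_nonneg _) hTn hKsum) hKsum
    rw [hKtsum] at h2
    nlinarith
  refine ⟨B, ?_, hBn⟩
  intro φ ψ
  -- summability data from the domain
  have hφP : Summable (fun k : ℤ => (1 + (k:ℝ)^2) * ‖(φ : l2Z) k‖^2) := (hdom _).1 φ.2
  have hψP : Summable (fun k : ℤ => (1 + (k:ℝ)^2) * ‖(ψ : l2Z) k‖^2) := (hdom _).1 ψ.2
  set Pφ : ℤ → ℝ := fun k => (1 + (k:ℝ)^2) * ‖(φ : l2Z) k‖^2 with hPφdef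
  set Pψ : ℤ → ℝ := fun k => (1 + (k:ℝ)^2) * ‖(ψ : l2Z) k‖^2 with hPψdef
  have hPφ0 : ∀ k, 0 ≤ Pφ k := fun k => by rw [hPφdef]; positivity
  have hPψ0 : ∀ k, 0 ≤ Pψ k := fun k => by rw [hPψdef]; positivity
  set Tφ : ℤ → ℤ → ℂ := fun k m => if m = 0 then 0 else
    ((a^(-|m|):ℝ):ℂ) * (2*(k:ℂ) - (m:ℂ)) * (φ:l2Z) (k-m) with hTφdef
  set Tψ : ℤ → ℤ → ℂ := fun k m => if m = 0 then 0 else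
    ((a^(-|m|):ℝ):ℂ) * (2*(k:ℂ) - (m:ℂ)) * (ψ:l2Z) (k-m) with hTψdef
  have hkφ : ∀ k, ((Aa φ : l2Z)) k = (1/2:ℂ) * ∑' m, Tφ k m :=
    fun k => haction (φ : l2Z) φ.2 k
  have hkψ : ∀ k, ((Aa ψ : l2Z)) k = (1/2:ℂ) * ∑' m, Tψ k m :=
    fun k => haction (ψ : l2Z) ψ.2 k
  set G₁ : ℤ×ℤ → ℂ := fun km =>
    (1/2:ℂ) * (γ km.1 * (ψ:l2Z) km.1) * star (Tφ km.1 km.2) with hG₁def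
  set G₂ : ℤ×ℤ → ℂ := fun km =>
    star ((φ:l2Z) km.1) * (γ km.1 * ((1/2:ℂ) * Tψ km.1 km.2)) with hG₂def
  set F : ℤ×ℤ → ℂ := fun km =>
    (1/2:ℂ) * ((a^(-|km.2|):ℝ):ℂ) * (2*(km.1:ℂ) - (km.2:ℂ)) *
      (γ km.1 - γ (km.1 - km.2)) * star ((φ:l2Z) (km.1 - km.2)) * (ψ:l2Z) km.1 with hFdef
  -- summability of G₁
  have hTφn : ∀ k m : ℤ, m ≠ 0 → ‖Tφ k m‖ ≤
      a^(-|m|) * ((|(k:ℝ)| + |((k-m:ℤ):ℝ)|) * ‖(φ:l2Z) (k-m)‖) := by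
    intro k m hm
    rw [hTφdef]
    simp only [if_neg hm]
    rw [norm_mul, norm_mul]
    have hra : ‖((a^(-|m|):ℝ):ℂ)‖ = a^(-|m|) := by
      rw [Complex.norm_real, Real.norm_eq_abs, abs_of_pos (ha0 m)]
    rw [hra]
    have e2 : ‖2*(k:ℂ) - (m:ℂ)‖ ≤ |(k:ℝ)| + |((k-m:ℤ):ℝ)| := by
      have h : 2*(k:ℂ) - (m:ℂ) = (k:ℂ) + ((k-m : ℤ):ℂ) := by push_cast; ring
      rw [h]
      refine (norm_add_le _ _).trans ?_
      rw [Complex.norm_intCast, Complex.norm_intCast]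
    have hx := norm_nonneg ((φ:l2Z) (k-m))
    nlinarith [mul_nonneg (ha0 m).le hx, (ha0 m).le]
  have hTψn : ∀ k m : ℤ, m ≠ 0 → ‖Tψ k m‖ ≤
      a^(-|m|) * ((|(k:ℝ)| + |((k-m:ℤ):ℝ)|) * ‖(ψ:l2Z) (k-m)‖) := by
    intro k m hm
    rw [hTψdef]
    simp only [if_neg hm]
    rw [norm_mul, norm_mul]
    have hra : ‖((a^(-|m|):ℝ):ℂ)‖ = a^(-|m|) := by
      rw [Complex.norm_real, Real.norm_eq_abs, abs_of_pos (ha0 m)]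
    rw [hra]
    have e2 : ‖2*(k:ℂ) - (m:ℂ)‖ ≤ |(k:ℝ)| + |((k-m:ℤ):ℝ)| := by
      have h : 2*(k:ℂ) - (m:ℂ) = (k:ℂ) + ((k-m : ℤ):ℂ) := by push_cast; ring
      rw [h]
      refine (norm_add_le _ _).trans ?_
      rw [Complex.norm_intCast, Complex.norm_intCast]
    have hx := norm_nonneg ((ψ:l2Z) (k-m))
    nlinarith [mul_nonneg (ha0 m).le hx, (ha0 m).le]
  have hG₁s : Summable G₁ := by
    apply Summable.of_norm_bounded (g :=
      (fun km : ℤ×ℤ => q1 γ * (a^(-|km.2|) * (Pφ (km.1 - km.2) + Pψ km.1))))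
      ((stmt3aux_dom_summable ha hφP hψP hPφ0 hPψ0).mul_left (q1 γ))
    rintro ⟨k, m⟩
    by_cases hm : m = 0
    · subst hm
      have h1 := hPφ0 (k - (0:ℤ)); have h2 := hPψ0 k; have h3 := (ha0 0).le
      have hz : G₁ (k, 0) = 0 := by simp [hG₁def, hTφdef]
      rw [hz, norm_zero]
      exact mul_nonneg hq0 (mul_nonneg h3 (add_nonneg h1 h2))
    · have hGn : ‖G₁ (k,m)‖ = (1/2) * ‖γ k * (ψ:l2Z) k‖ * ‖Tφ k m‖ := by
        simp only [hG₁def]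
        rw [norm_mul, norm_mul, norm_star]
        norm_num
      have hγb : ‖γ k * (ψ:l2Z) k‖ ≤ q1 γ * ‖(ψ:l2Z) k‖ := by
        rw [norm_mul]
        exact mul_le_mul_of_nonneg_right (hMq k) (norm_nonneg _)
      have hT := hTφn k m hm
      have h1 : ‖(φ:l2Z) (k-m)‖^2 ≤ Pφ (k-m) := by
        simp only [hPφdef]
        nlinarith [sq_nonneg (((k-m : ℤ):ℝ)), sq_nonneg ‖(φ:l2Z) (k-m)‖]
      have h2 : (|((k-m:ℤ):ℝ)| * ‖(φ:l2Z) (k-m)‖)^2 ≤ Pφ (k-m) := by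
        simp only [hPφdef]; rw [mul_pow, sq_abs]
        nlinarith [sq_nonneg ‖(φ:l2Z) (k-m)‖]
      have h3 : ‖(ψ:l2Z) k‖^2 ≤ Pψ k := by
        simp only [hPψdef]
        nlinarith [sq_nonneg ((k:ℝ)), sq_nonneg ‖(ψ:l2Z) k‖]
      have h4 : (|(k:ℝ)| * ‖(ψ:l2Z) k‖)^2 ≤ Pψ k := by
        simp only [hPψdef]; rw [mul_pow, sq_abs]
        nlinarith [sq_nonneg ‖(ψ:l2Z) k‖]
      have hab := stmt3aux_abbound (norm_nonneg ((φ:l2Z) (k-m))) (norm_nonneg ((ψ:l2Z) k))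
        (abs_nonneg ((k:ℝ))) (abs_nonneg (((k-m:ℤ):ℝ))) h1 h2 h3 h4
      rw [hGn]
      have hq := hq0
      have hstep1 : (1/2) * ‖γ k * (ψ:l2Z) k‖ * ‖Tφ k m‖ ≤
          (1/2) * (q1 γ * ‖(ψ:l2Z) k‖) *
            (a^(-|m|) * ((|(k:ℝ)| + |((k-m:ℤ):ℝ)|) * ‖(φ:l2Z) (k-m)‖)) := by
        have hTn0 := norm_nonneg (Tφ k m)
        have := mul_le_mul hγb hT hTn0 (mul_nonneg hq0 (norm_nonneg _))
        nlinarith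
      refine hstep1.trans ?_
      have := mul_le_mul_of_nonneg_left hab (mul_nonneg hq0 (ha0 m).le)
      nlinarith [this]
  have hG₂s : Summable G₂ := by
    apply Summable.of_norm_bounded (g :=
      (fun km : ℤ×ℤ => q1 γ * (a^(-|km.2|) * (Pψ (km.1 - km.2) + Pφ km.1))))
      ((stmt3aux_dom_summable ha hψP hφP hPψ0 hPφ0).mul_left (q1 γ))
    rintro ⟨k, m⟩
    by_cases hm : m = 0
    · subst hm
      have h1 := hPψ0 (k - (0:ℤ)); have h2 := hPφ0 k; have h3 := (ha0 0).le
      have hz : G₂ (k, 0) = 0 := by simp [hG₂def, hTψdef]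
      rw [hz, norm_zero]
      exact mul_nonneg hq0 (mul_nonneg h3 (add_nonneg h1 h2))
    · have hGn : ‖G₂ (k,m)‖ = ‖(φ:l2Z) k‖ * (‖γ k‖ * ((1/2) * ‖Tψ k m‖)) := by
        simp only [hG₂def]
        rw [norm_mul, norm_mul, norm_mul, norm_star]
        norm_num
      have hT := hTψn k m hm
      have h1 : ‖(ψ:l2Z) (k-m)‖^2 ≤ Pψ (k-m) := by
        simp only [hPψdef]
        nlinarith [sq_nonneg (((k-m : ℤ):ℝ)), sq_nonneg ‖(ψ:l2Z) (k-m)‖]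
      have h2 : (|((k-m:ℤ):ℝ)| * ‖(ψ:l2Z) (k-m)‖)^2 ≤ Pψ (k-m) := by
        simp only [hPψdef]; rw [mul_pow, sq_abs]
        nlinarith [sq_nonneg ‖(ψ:l2Z) (k-m)‖]
      have h3 : ‖(φ:l2Z) k‖^2 ≤ Pφ k := by
        simp only [hPφdef]
        nlinarith [sq_nonneg ((k:ℝ)), sq_nonneg ‖(φ:l2Z) k‖]
      have h4 : (|(k:ℝ)| * ‖(φ:l2Z) k‖)^2 ≤ Pφ k := by
        simp only [hPφdef]; rw [mul_pow, sq_abs]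
        nlinarith [sq_nonneg ‖(φ:l2Z) k‖]
      have hab := stmt3aux_abbound (norm_nonneg ((ψ:l2Z) (k-m))) (norm_nonneg ((φ:l2Z) k))
        (abs_nonneg ((k:ℝ))) (abs_nonneg (((k-m:ℤ):ℝ))) h1 h2 h3 h4
      rw [hGn]
      have hstep1 : ‖(φ:l2Z) k‖ * (‖γ k‖ * ((1/2) * ‖Tψ k m‖)) ≤
          ‖(φ:l2Z) k‖ * (q1 γ * ((1/2) *
            (a^(-|m|) * ((|(k:ℝ)| + |((k-m:ℤ):ℝ)|) * ‖(ψ:l2Z) (k-m)‖)))) := by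
        have hTn0 := norm_nonneg (Tψ k m)
        have hmq := hMq k
        have h5 := mul_le_mul hmq hT hTn0 hq0
        nlinarith [norm_nonneg ((φ:l2Z) k), h5,
          mul_le_mul_of_nonneg_left h5 (norm_nonneg ((φ:l2Z) k))]
      refine hstep1.trans ?_
      have hkey := mul_le_mul_of_nonneg_left hab (mul_nonneg hq0 (ha0 m).le)
      nlinarith [hkey, mul_le_mul_of_nonneg_left hkey (norm_nonneg ((φ:l2Z) k)),
        mul_le_mul_of_nonneg_right h3 (mul_nonneg hq0 (ha0 m).le)]
  have hG₂e : Summable (fun p => G₂ (stmt3aux_eInv p)) :=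
    ((stmt3aux_eInv.summable_iff (f := G₂)).2 hG₂s).congr fun p => rfl
  have hpt : ∀ km : ℤ×ℤ, G₁ km - G₂ (stmt3aux_eInv km) = F km := by
    rintro ⟨k, m⟩
    show G₁ (k, m) - G₂ (k - m, -m) = F (k, m)
    by_cases hm : m = 0
    · subst hm
      simp [hG₁def, hG₂def, hFdef, hTφdef, hTψdef]
    · have hm' : -m ≠ 0 := neg_ne_zero.2 hm
      simp only [hG₁def, hG₂def, hFdef, hTφdef, hTψdef, if_neg hm, if_neg hm']
      simp only [abs_neg, sub_neg_eq_add, sub_add_cancel]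
      push_cast
      simp only [Complex.star_def, map_mul, map_sub, map_div₀, map_one, map_ofNat,
        map_zpow₀, map_intCast, Complex.conj_ofReal]
      ring
  have hFs : Summable F := (hG₁s.sub hG₂e).congr hpt
  -- the left-hand side, first term
  have hL1 : ⟪Aa φ, Dγ (ψ:l2Z)⟫ = ∑' p, G₁ p := by
    rw [lp.inner_eq_tsum, Summable.tsum_prod' hG₁s (fun k => hG₁s.prod_factor k)]
    apply tsum_congr
    intro k
    show ((Dγ (ψ:l2Z)) k) * star ((Aa φ : l2Z) k) = ∑' m, G₁ (k, m)
    rw [mul_comm]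
    rw [hD, hkφ k, star_mul', tsum_star]
    simp only [hG₁def]
    rw [tsum_mul_left]
    have hhalf : star (1/2:ℂ) = 1/2 := by simp
    rw [hhalf]
    ring
  -- the left-hand side, second term
  have hL2 : ⟪(φ:l2Z), Dγ (Aa ψ)⟫ = ∑' p, G₂ p := by
    rw [lp.inner_eq_tsum, Summable.tsum_prod' hG₂s (fun k => hG₂s.prod_factor k)]
    apply tsum_congr
    intro k
    show ((Dγ (Aa ψ : l2Z)) k) * star ((φ:l2Z) k) = ∑' m, G₂ (k, m)
    rw [mul_comm]
    rw [hD, hkψ k]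
    simp only [hG₂def]
    simp only [tsum_mul_left]
  -- the right-hand side
  have hTψvs : Summable fun m => T m (ψ:l2Z) := by
    apply Summable.of_norm_bounded (g := fun m => K m * ‖(ψ:l2Z)‖) (hKsum.mul_right _)
    intro m
    exact le_trans ((T m).le_opNorm _) (mul_le_mul_of_nonneg_right (hTn m) (norm_nonneg _))
  set H : ℤ×ℤ → ℂ := fun mj =>
    star ((φ:l2Z) mj.2) * (c mj.1 mj.2 * (ψ:l2Z) (mj.2 + mj.1)) with hHdef
  have hHe : ∀ p : ℤ×ℤ, H (stmt3aux_eShift p) = F p := by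
    rintro ⟨k, m⟩
    show H (m, k - m) = F (k, m)
    simp only [hHdef, hFdef, hcdef]
    simp only [sub_add_cancel]
    push_cast
    simp only [Complex.star_def]
    ring
  have hHs : Summable H := by
    have h1 : Summable (fun p => H (stmt3aux_eShift p)) := hFs.congr (fun p => (hHe p).symm)
    exact (stmt3aux_eShift.summable_iff (f := H)).1 (h1.congr fun p => rfl)
  have hR : ⟪(φ:l2Z), B (ψ:l2Z)⟫ = ∑' p, F p := by
    have hBψ : B (ψ:l2Z) = ∑' m, T m (ψ:l2Z) := by
      rw [hBdef]
      exact (ContinuousLinearMap.apply ℂ l2Z (ψ:l2Z)).map_tsum hTsum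
    rw [hBψ]
    rw [show ⟪(φ:l2Z), ∑' m, T m (ψ:l2Z)⟫ = ∑' m, ⟪(φ:l2Z), T m (ψ:l2Z)⟫ from
      (innerSL ℂ ((φ:l2Z))).map_tsum hTψvs]
    have hstep : ∀ m, ⟪(φ:l2Z), T m (ψ:l2Z)⟫ = ∑' j, H (m, j) := by
      intro m
      rw [lp.inner_eq_tsum]
      apply tsum_congr
      intro j
      show ((T m (ψ:l2Z)) j) * star ((φ:l2Z) j) = H (m, j)
      rw [mul_comm]
      rw [hTc m (ψ:l2Z) j]
    rw [tsum_congr hstep, ← Summable.tsum_prod' hHs (fun m => hHs.prod_factor m),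
      ← stmt3aux_eShift.tsum_eq H]
    exact tsum_congr hHe
  rw [hL1, hL2, hR, ← stmt3aux_eInv.tsum_eq G₂, ← Summable.tsum_sub hG₁s hG₂e]
  exact tsum_congr hpt
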